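/- arXiv:1308.2092 — 5 statements merged into one kernel-verified Lean document; each statement's English description precedes it below -/
import Mathlib

section
/- For any prime p, integer t ≥ 1, and an indeterminate y, the polynomial (1-y)^{p^t} - 1 + y^{p^t} lies in the ideal of ℤ[y] generated by the elements p^i · y^{p^{t-i}} for 1 ≤ i ≤ t. -/
open Polynomial Finset

lemma key (p : ℕ) (hp : p.Prime) (q : Polynomial ℤ) :
    C (p:ℤ) * q ∣ (1 - q)^p - 1 + q^p := by
  have h1 : (1 - q)^p = ∑ k ∈ Finset.range (p+1), (-q)^k * 1^(p-k) * (p.choose k : Polynomial ℤ) := by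
    rw [sub_eq_add_neg, add_comm]; exact add_pow _ _ _
  simp only [one_pow, mul_one] at h1
  have h2 : (1 - q)^p - 1 + q^p
      = ∑ k ∈ Finset.range p, (-q)^(k+1) * (p.choose (k+1) : Polynomial ℤ) + q^p := by
    rw [h1, Finset.sum_range_succ']
    simp
  rw [h2]
  obtain ⟨m, rfl⟩ : ∃ m, p = m + 1 := ⟨p - 1, by have := hp.pos; omega⟩
  rw [Finset.sum_range_succ]
  have hlast : (-q)^(m+1) * ((m+1).choose (m+1) : Polynomial ℤ) + q^(m+1)
      = (-q)^(m+1) + q^(m+1) := by simp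
  rw [add_assoc, hlast]
  apply dvd_add
  · apply Finset.dvd_sum
    intro k hk
    simp only [Finset.mem_range] at hk
    have hch : (m+1) ∣ (m+1).choose (k+1) :=
      hp.dvd_choose_self (by omega) (by omega)
    obtain ⟨c, hc⟩ := hch
    have : ((m+1).choose (k+1) : Polynomial ℤ) = C ((m:ℤ)+1) * (c : Polynomial ℤ) := by
      rw [hc]; push_cast; simp [mul_comm]
    rw [this]
    have hq : q ∣ (-q)^(k+1) := (dvd_neg.mpr dvd_rfl).trans (dvd_pow_self _ (by omega))
    push_cast
    calc C ((m:ℤ)+1) * q ∣ C ((m:ℤ)+1) * (-q)^(k+1) := mul_dvd_mul_left _ hq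
      _ ∣ (-q)^(k+1) * (C ((m:ℤ)+1) * (c : Polynomial ℤ)) := ⟨(c:Polynomial ℤ), by ring⟩
  · rcases hp.eq_two_or_odd' with h2 | hodd
    · have hm : m = 1 := by omega
      subst hm
      refine ⟨q, ?_⟩
      have h22 : (C ((((1:ℕ)+1:ℕ)):ℤ) : Polynomial ℤ) = 2 := by push_cast; rw [map_ofNat]
      rw [h22]
      ring
    · rw [hodd.neg_pow]; simp

def S (p t : ℕ) : Set (Polynomial ℤ) :=
  (fun i : ℕ => (C (p : ℤ)) ^ i * X ^ p ^ (t - i)) '' Set.Icc 1 t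

lemma helper (p t i j : ℕ) (hij : i ≤ j) (hi : i ∈ Set.Icc 1 t) (hj : j ∈ Set.Icc 1 t) :
    (C (p:ℤ))^i * X^(p^(t-i)) * ((C (p:ℤ))^j * X^(p^(t-j))) ∈ Ideal.span (S p (t+1)) := by
  simp only [Set.mem_Icc] at hi hj
  obtain ⟨j', rfl⟩ : ∃ j', j = j'+1 := ⟨j-1, by omega⟩
  have hg : (C (p:ℤ))^(i+1) * X^(p^((t+1)-(i+1))) ∈ S p (t+1) :=
    ⟨i+1, Set.mem_Icc.mpr ⟨by omega, by omega⟩, rfl⟩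
  have heq : (C (p:ℤ))^i * X^(p^(t-i)) * ((C (p:ℤ))^(j'+1) * X^(p^(t-(j'+1))))
      = (C (p:ℤ))^(i+1) * X^(p^((t+1)-(i+1))) * ((C (p:ℤ))^j' * X^(p^(t-(j'+1)))) := by
    have h' : (t+1)-(i+1) = t-i := by omega
    rw [h']; ring
  rw [heq]
  exact Ideal.mul_mem_right _ _ (Ideal.subset_span hg)

lemma mulIt (p t : ℕ) :
    Ideal.span (S p t) * Ideal.span (S p t) ≤ Ideal.span (S p (t+1)) := by
  rw [Ideal.span_mul_span']
  apply Ideal.span_le.mpr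
  rintro _ ⟨_, ⟨i, hi, rfl⟩, _, ⟨j, hj, rfl⟩, rfl⟩
  dsimp only
  rcases le_total i j with h | h
  · exact helper p t i j h hi hj
  · rw [mul_comm]; exact helper p t j i h hj hi

lemma pmul (p t : ℕ) :
    Ideal.span (S p t) * Ideal.span {(C (p:ℤ))} ≤ Ideal.span (S p (t+1)) := by
  rw [Ideal.span_mul_span']
  apply Ideal.span_le.mpr
  rintro _ ⟨_, ⟨i, hi, rfl⟩, _, rfl, rfl⟩
  dsimp only
  simp only [Set.mem_Icc] at hi
  have hg : (C (p:ℤ))^(i+1) * X^(p^((t+1)-(i+1))) ∈ S p (t+1) :=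
    ⟨i+1, Set.mem_Icc.mpr ⟨by omega, by omega⟩, rfl⟩
  have heq : (C (p:ℤ))^i * X^(p^(t-i)) * C (p:ℤ)
      = (C (p:ℤ))^(i+1) * X^(p^((t+1)-(i+1))) := by
    have h' : (t+1)-(i+1) = t-i := by omega
    rw [h']; ring
  rw [heq]
  exact Ideal.subset_span hg

/-- For any prime `p` and `t ≥ 1`, the polynomial `(1-y)^{p^t} - 1 + y^{p^t}` lies in
the ideal of `ℤ[y]` generated by `p^i * y^{p^{t-i}}` for `1 ≤ i ≤ t`. -/
theorem stmt0 (p : ℕ) (hp : p.Prime) (t : ℕ) (ht : 1 ≤ t) :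
    ((1 - X) ^ p ^ t - 1 + X ^ p ^ t : Polynomial ℤ) ∈
      Ideal.span ((fun i : ℕ => (C (p : ℤ)) ^ i * X ^ p ^ (t - i)) '' Set.Icc 1 t) := by
  induction t, ht using Nat.le_induction with
  | base =>
    rw [Set.Icc_self, Set.image_singleton, Ideal.mem_span_singleton]
    simpa using key p hp X
  | succ t ht ih =>
    show _ ∈ Ideal.span (S p (t+1))
    set g : Polynomial ℤ := (1 - X)^(p^t) - 1 + X^(p^t) with hgdef
    set B : Polynomial ℤ := 1 - X^(p^t) with hBdef
    have ihg : g ∈ Ideal.span (S p t) := ih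
    have hg2 : g * g ∈ Ideal.span (S p (t+1)) :=
      mulIt p t (Ideal.mul_mem_mul ihg ihg)
    have hpg : C (p:ℤ) * g ∈ Ideal.span (S p (t+1)) := by
      rw [mul_comm]
      exact pmul p t (Ideal.mul_mem_mul ihg (Ideal.subset_span rfl))
    have hexp : (B + g)^p = ∑ k ∈ Finset.range (p+1),
        g^k * B^(p-k) * (p.choose k : Polynomial ℤ) := by
      rw [add_comm]; exact add_pow _ _ _
    have hmain : (B + g)^p - B^p ∈ Ideal.span (S p (t+1)) := by
      have hd : (B + g)^p - B^p
          = ∑ k ∈ Finset.range p, g^(k+1) * B^(p-(k+1)) * (p.choose (k+1) : Polynomial ℤ) := by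
        rw [hexp, Finset.sum_range_succ']
        simp
      rw [hd]
      apply Ideal.sum_mem
      intro k hk
      rcases Nat.eq_zero_or_pos k with rfl | hk1
      · have heq : g^(0+1) * B^(p-(0+1)) * (p.choose (0+1) : Polynomial ℤ)
            = (C (p:ℤ) * g) * B^(p-1) := by
          rw [Nat.choose_one_right, ← Polynomial.C_eq_natCast]
          push_cast
          ring
        rw [heq]
        exact Ideal.mul_mem_right _ _ hpg
      · obtain ⟨k', rfl⟩ : ∃ k', k = k'+1 := ⟨k-1, by omega⟩
        have heq : g^(k'+1+1) * B^(p-(k'+1+1)) * (p.choose (k'+1+1) : Polynomial ℤ)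
            = (g * g) * (g^k' * B^(p-(k'+1+1)) * (p.choose (k'+1+1) : Polynomial ℤ)) := by
          ring
        rw [heq]
        exact Ideal.mul_mem_right _ _ hg2
    have hbase : B^p - 1 + (X^(p^t))^p ∈ Ideal.span (S p (t+1)) := by
      obtain ⟨c, hc⟩ := key p hp (X^(p^t) : Polynomial ℤ)
      rw [hBdef, hc]
      have hgen : (C (p:ℤ))^1 * X^(p^((t+1)-1)) ∈ S p (t+1) :=
        ⟨1, Set.mem_Icc.mpr ⟨le_refl 1, by omega⟩, rfl⟩
      have heq : C (p:ℤ) * X^(p^t) * c = (C (p:ℤ))^1 * X^(p^((t+1)-1)) * c := by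
        simp
      rw [heq]
      exact Ideal.mul_mem_right _ _ (Ideal.subset_span hgen)
    have hfin : ((1 - X) ^ p ^ (t+1) - 1 + X ^ p ^ (t+1) : Polynomial ℤ)
        = ((B + g)^p - B^p) + (B^p - 1 + (X^(p^t))^p) := by
      have h1 : B + g = (1 - X)^(p^t) := by rw [hgdef, hBdef]; ring
      rw [pow_succ, pow_mul, pow_mul, h1]
      ring
    rw [hfin]
    exact Ideal.add_mem _ hmain hbase
end

section
/- Let p be prime, n ≥ 2, b_1 ≥ 1 with p ∤ b_1, and m_2, …, m_n ≥ 0 integers. Define u_i = b_1 + p^{n-1}∑_{k=2}^i m_k and b_i = b_1 + p^n ∑_{k=2}^i p^{k-2} m_k, and C_i = u_i - b_i/p^i (with C_0 = 0). Then C_i = u_{i+1} - b_{i+1}/p^i for 0 ≤ i ≤ n-1, and the sequence C_0 < C_1 < ⋯ < C_n is strictly increasing. -/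
/-- With `u_i = b_1 + p^{n-1}∑_{k=2}^i m_k`, `b_i = b_1 + p^n ∑_{k=2}^i p^{k-2} m_k` and
`C_i = u_i - b_i/p^i` (with `C_0 = 0`), one has `C_i = u_{i+1} - b_{i+1}/p^i` for
`0 ≤ i ≤ n-1`, and the sequence `C_0 < C_1 < ⋯ < C_n` is strictly increasing. -/
theorem stmt7 (p : ℕ) (hp : p.Prime) (n : ℕ) (hn : 2 ≤ n) (b1 : ℕ) (hb1 : 1 ≤ b1)
    (hcop : ¬ p ∣ b1) (m : ℕ → ℕ) :
    let u : ℕ → ℚ := fun i => (b1 : ℚ) + (p : ℚ) ^ (n - 1) * ∑ k ∈ Finset.Icc 2 i, (m k : ℚ)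
    let bb : ℕ → ℚ := fun i =>
      (b1 : ℚ) + (p : ℚ) ^ n * ∑ k ∈ Finset.Icc 2 i, (p : ℚ) ^ (k - 2) * (m k : ℚ)
    let C : ℕ → ℚ := fun i => if i = 0 then 0 else u i - bb i / (p : ℚ) ^ i
    (∀ i, i ≤ n - 1 → C i = u (i + 1) - bb (i + 1) / (p : ℚ) ^ i) ∧
    (∀ i, i < n → C i < C (i + 1)) := by
  intro u bb C
  have hp1 : (1 : ℚ) < (p : ℚ) := by exact_mod_cast hp.one_lt
  have hp0 : (p : ℚ) ≠ 0 := by positivity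
  obtain ⟨n', rfl⟩ : ∃ n', n = n' + 2 := ⟨n - 2, by omega⟩
  -- key equality, valid for all i
  have key : ∀ i, C i = u (i + 1) - bb (i + 1) / (p : ℚ) ^ i := by
    intro i
    rcases Nat.eq_zero_or_pos i with rfl | hi1
    · simp [C, u, bb, show Finset.Icc 2 1 = ∅ from rfl]
    · obtain ⟨j, rfl⟩ : ∃ j, i = j + 1 := ⟨i - 1, by omega⟩
      have h2 : 2 ≤ j + 1 + 1 := by omega
      simp only [C, u, bb, if_neg (by omega : j + 1 ≠ 0),
        Finset.sum_Icc_succ_top h2]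
      have he : j + 1 + 1 - 2 = j := by omega
      have hn1 : n' + 2 - 1 = n' + 1 := rfl
      rw [he, hn1]
      field_simp
      ring
  refine ⟨fun i _ => key i, fun i hi => ?_⟩
  have hbpos : 0 < bb (i + 1) := by
    have hs : 0 ≤ ∑ k ∈ Finset.Icc 2 (i + 1), (p : ℚ) ^ (k - 2) * (m k : ℚ) :=
      Finset.sum_nonneg fun k _ => by positivity
    have hb : (1 : ℚ) ≤ (b1 : ℚ) := by exact_mod_cast hb1
    have : (0:ℚ) < (p:ℚ) ^ (n' + 2) := by positivity
    simp only [bb]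
    nlinarith
  rw [key i]
  have hC1 : C (i + 1) = u (i + 1) - bb (i + 1) / (p : ℚ) ^ (i + 1) := by
    simp only [C, if_neg (by omega : i + 1 ≠ 0)]
  rw [hC1]
  have hpow : (p : ℚ) ^ i < (p : ℚ) ^ (i + 1) := by
    apply pow_lt_pow_right₀ hp1 (by omega)
  have : bb (i + 1) / (p : ℚ) ^ (i + 1) < bb (i + 1) / (p : ℚ) ^ i :=
    div_lt_div_of_pos_left hbpos (by positivity) hpow
  linarith
end

section
/- With u_i, b_i defined as u_i = b_1 + p^{n-1}∑_{k=2}^i m_k and b_i = b_1 + p^n ∑_{k=2}^i p^{k-2} m_k for b_1 > 0 and m_k ≥ 0, one has u_n - b_n/p^n ≥ (p-1)(u_n - b_1)/p. -/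
/-- With `u_n = b_1 + p^{n-1}∑_{k=2}^n m_k` and `b_n = b_1 + p^n ∑_{k=2}^n p^{k-2} m_k`
for `b_1 > 0` and `m_k ≥ 0`, one has `u_n - b_n/p^n ≥ (p-1)(u_n - b_1)/p`. -/
theorem stmt8 (p : ℕ) (hp : 2 ≤ p) (n : ℕ) (hn : 1 ≤ n) (b1 : ℕ) (hb1 : 0 < b1)
    (m : ℕ → ℕ) :
    let u : ℚ := (b1 : ℚ) + (p : ℚ) ^ (n - 1) * ∑ k ∈ Finset.Icc 2 n, (m k : ℚ)
    let bb : ℚ := (b1 : ℚ) + (p : ℚ) ^ n * ∑ k ∈ Finset.Icc 2 n, (p : ℚ) ^ (k - 2) * (m k : ℚ)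
    ((p : ℚ) - 1) * (u - (b1 : ℚ)) / (p : ℚ) ≤ u - bb / (p : ℚ) ^ n := by
  intro u bb
  have hp0 : (0:ℚ) < p := by positivity
  have hp2 : (2:ℚ) ≤ (p:ℚ) := by exact_mod_cast hp
  have hb1' : (0:ℚ) < (b1:ℚ) := by exact_mod_cast hb1
  simp only [u, bb]
  obtain ⟨k, rfl⟩ : ∃ k, n = k + 1 := ⟨n - 1, (Nat.succ_pred_eq_of_pos hn).symm⟩
  rcases Nat.eq_zero_or_pos k with rfl | hk
  · simp only [zero_add, Finset.Icc_self, pow_one]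
    norm_num
    rw [div_le_iff₀ hp0]
    nlinarith
  obtain ⟨j, rfl⟩ : ∃ j, k = j + 1 := ⟨k - 1, (Nat.succ_pred_eq_of_pos hk).symm⟩
  set S : ℚ := ∑ k ∈ Finset.Icc 2 (j + 1 + 1), (m k : ℚ) with hS
  set T : ℚ := ∑ k ∈ Finset.Icc 2 (j + 1 + 1), (p : ℚ) ^ (k - 2) * (m k : ℚ) with hT
  have hS0 : 0 ≤ S := Finset.sum_nonneg fun i _ => by positivity
  have hTS : T ≤ (p:ℚ) ^ j * S := by
    rw [hT, hS, Finset.mul_sum]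
    refine Finset.sum_le_sum fun i hi => ?_
    have hi2 := (Finset.mem_Icc.mp hi).2
    have : (p:ℚ) ^ (i - 2) ≤ (p:ℚ) ^ j := by
      apply pow_le_pow_right₀ (by linarith)
      omega
    nlinarith [Nat.cast_nonneg (α := ℚ) (m i)]
  have hpn : (0:ℚ) < (p:ℚ) ^ (j + 1 + 1) := by positivity
  have hsimp : (j + 1 + 1 : ℕ) - 1 = j + 1 := rfl
  rw [hsimp]
  have e1 : ((b1:ℚ) + (p:ℚ)^(j+1+1)*T)/(p:ℚ)^(j+1+1) = (b1:ℚ)/(p:ℚ)^(j+1+1) + T := by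
    field_simp
  have e2 : ((p:ℚ) - 1) * ((b1:ℚ) + (p:ℚ)^(j+1) * S - (b1:ℚ)) / (p:ℚ)
      = ((p:ℚ) - 1) * ((p:ℚ)^j * S) := by
    rw [pow_succ']
    field_simp
    ring
  have hb1n : (b1:ℚ)/(p:ℚ)^(j+1+1) ≤ (b1:ℚ) := by
    rw [div_le_iff₀ hpn]
    nlinarith [one_le_pow₀ (by linarith : (1:ℚ) ≤ p) (n := j+1+1)]
  rw [e1, e2]
  have e3 : (p:ℚ)^(j+1) = (p:ℚ) * (p:ℚ)^j := pow_succ' _ _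
  nlinarith [mul_nonneg (pow_pos hp0 j).le hS0]
end

section
/- Let K be a complete discretely valued field with perfect residue field of characteristic p, and L/K a totally ramified cyclic extension of degree p with ramification break u coprime to p, generated by x with x^p - x = α ∈ K and v_L(x) = -u. If σ generates Gal(L/K) and σx = x + 1 + δ with δ ∈ 𝔪_L, then v_L(δ) = p·v_K(p) - (p-1)u. -/
section aux
variable {L : Type*} [Field L] (v : L → ℤ)

theorem aux_v_one (hmul : ∀ a b : L, a ≠ 0 → b ≠ 0 → v (a * b) = v a + v b) :
    v 1 = 0 := by
  have h := hmul 1 1 one_ne_zero one_ne_zero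
  rw [mul_one] at h
  omega

theorem aux_v_neg (hmul : ∀ a b : L, a ≠ 0 → b ≠ 0 → v (a * b) = v a + v b)
    (a : L) (ha : a ≠ 0) : v (-a) = v a := by
  have h1 : v ((-1 : L) * (-1)) = v (-1) + v (-1) := hmul _ _ (by norm_num) (by norm_num)
  rw [neg_one_mul, neg_neg] at h1
  have h0 := aux_v_one v hmul
  have h2 := hmul (-1) a (by norm_num) ha
  rw [neg_one_mul] at h2
  omega

theorem aux_v_add (hmul : ∀ a b : L, a ≠ 0 → b ≠ 0 → v (a * b) = v a + v b)
    (hadd : ∀ a b : L, a ≠ 0 → b ≠ 0 → a + b ≠ 0 → min (v a) (v b) ≤ v (a + b))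
    (a b : L) (ha : a ≠ 0)
    (hb : b = 0 ∨ (b ≠ 0 ∧ v a < v b)) : a + b ≠ 0 ∧ v (a + b) = v a := by
  rcases hb with rfl | ⟨hb0, hlt⟩
  · simpa using ha
  have hne : a + b ≠ 0 := by
    intro h
    have hb' : b = -a := by linear_combination h
    rw [hb', aux_v_neg v hmul a ha] at hlt
    exact absurd hlt (lt_irrefl _)
  refine ⟨hne, ?_⟩
  have h1 := hadd a b ha hb0 hne
  have h2 := hadd (a + b) (-b) hne (neg_ne_zero.mpr hb0) (by simpa using ha)
  rw [add_neg_cancel_right, aux_v_neg v hmul b hb0] at h2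
  omega

theorem aux_v_pow (hmul : ∀ a b : L, a ≠ 0 → b ≠ 0 → v (a * b) = v a + v b)
    (a : L) (ha : a ≠ 0) (n : ℕ) : v (a ^ n) = (n : ℤ) * v a := by
  induction n with
  | zero => simpa using aux_v_one v hmul
  | succ n ih =>
    rw [pow_succ, hmul _ _ (pow_ne_zero n ha) ha, ih]
    push_cast
    ring

theorem aux_v_nat (hmul : ∀ a b : L, a ≠ 0 → b ≠ 0 → v (a * b) = v a + v b)
    (hadd : ∀ a b : L, a ≠ 0 → b ≠ 0 → a + b ≠ 0 → min (v a) (v b) ≤ v (a + b)) :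
    ∀ n : ℕ, (n : L) ≠ 0 → 0 ≤ v (n : L) := by
  intro n
  induction n with
  | zero => simp
  | succ n ih =>
    intro hn
    rw [Nat.cast_succ] at hn ⊢
    by_cases h0 : (n : L) = 0
    · rw [h0, zero_add, aux_v_one v hmul]
    · have h := hadd (n : L) 1 h0 one_ne_zero hn
      rw [aux_v_one v hmul] at h
      have := ih h0
      omega

theorem aux_v_sum (hadd : ∀ a b : L, a ≠ 0 → b ≠ 0 → a + b ≠ 0 → min (v a) (v b) ≤ v (a + b))
    {ι : Type*} (s : Finset ι) (f : ι → L) (c : ℤ)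
    (h : ∀ i ∈ s, f i = 0 ∨ c ≤ v (f i)) :
    (∑ i ∈ s, f i) = 0 ∨ c ≤ v (∑ i ∈ s, f i) := by
  induction s using Finset.cons_induction with
  | empty => simp
  | cons a s has ih =>
    rw [Finset.sum_cons]
    have hs := ih fun i hi => h i (Finset.mem_cons_of_mem hi)
    by_cases hfa : f a = 0
    · rw [hfa, zero_add]; exact hs
    by_cases hss : (∑ i ∈ s, f i) = 0
    · rw [hss, add_zero]
      exact Or.inr ((h a (Finset.mem_cons_self a s)).resolve_left hfa)
    by_cases h0 : f a + ∑ i ∈ s, f i = 0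
    · exact Or.inl h0
    right
    have hm := hadd _ _ hfa hss h0
    have h1 := (h a (Finset.mem_cons_self a s)).resolve_left hfa
    have h2 := hs.resolve_left hss
    omega

end aux

/-- Let `L/K` be a totally ramified cyclic extension of degree `p` in residue
characteristic `p`, with ramification break `u` coprime to `p`, generated by `x` with
`x^p - x = α ∈ K` and `v_L(x) = -u`, where `-p v_K(p)/(p-1) < v_L(x) < 0`.  If `σ`
generates `Gal(L/K)` and `σ x = x + 1 + δ` with `δ ∈ 𝔪_L`, then
`v_L(δ) = p v_K(p) - (p-1)u` (note `v_L(p) = p v_K(p)` since `L/K` is totally ramified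
of degree `p`).  The normalized valuation `v_L` is encoded abstractly by the
multiplicative/ultrametric/Galois-invariance hypotheses below. -/
theorem stmt9 (p : ℕ) (hp : p.Prime) (L : Type*) [Field L]
    (v : L → ℤ)
    (hmul : ∀ a b : L, a ≠ 0 → b ≠ 0 → v (a * b) = v a + v b)
    (hadd : ∀ a b : L, a ≠ 0 → b ≠ 0 → a + b ≠ 0 → min (v a) (v b) ≤ v (a + b))
    (hsurj : ∀ mz : ℤ, ∃ a : L, a ≠ 0 ∧ v a = mz)
    (σ : L ≃+* L) (horder : orderOf σ = p)
    (hσv : ∀ a : L, a ≠ 0 → v (σ a) = v a)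
    (x δ : L) (u : ℕ) (hu : 0 < u) (hcop : ¬ p ∣ u)
    (hpL : (p : L) ≠ 0)
    (hx0 : x ≠ 0) (hvx : v x = -(u : ℤ))
    (hbound : ((p : ℤ) - 1) * u < v (p : L))
    (hfix : σ (x ^ p - x) = x ^ p - x)
    (hσx : σ x = x + 1 + δ)
    (hδ : δ = 0 ∨ 1 ≤ v δ) :
    δ ≠ 0 ∧ v δ = v (p : L) - ((p : ℤ) - 1) * u := by
  obtain ⟨r, rfl⟩ : ∃ r, p = r + 2 := ⟨p - 2, by have := hp.two_le; omega⟩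
  have v1 : v (1 : L) = 0 := aux_v_one v hmul
  have hu1 : (1 : ℤ) ≤ (u : ℤ) := by exact_mod_cast hu
  have hr0 : (0 : ℤ) ≤ (r : ℤ) := Int.natCast_nonneg r
  -- bound on v p
  have hc : ((r : ℤ) + 1) * (u : ℤ) < v ((r + 2 : ℕ) : L) := by
    have h := hbound
    rw [show ((r + 2 : ℕ) : ℤ) = (r : ℤ) + 2 by push_cast; ring] at h
    linarith
  have hvp_pos : 0 < v ((r + 2 : ℕ) : L) := by nlinarith
  set t : L := 1 + δ with ht_def
  have ht : t ≠ 0 ∧ v t = 0 := by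
    by_cases h : δ = 0
    · rw [ht_def, h]
      refine ⟨by norm_num, by simpa using v1⟩
    · have h1 := hδ.resolve_left h
      have := aux_v_add v hmul hadd 1 δ one_ne_zero (Or.inr ⟨h, by omega⟩)
      rw [v1] at this
      exact this
  obtain ⟨ht0, htv⟩ := ht
  have vtpow : ∀ n : ℕ, v (t ^ n) = 0 := by
    intro n
    rw [aux_v_pow v hmul t ht0 n, htv, mul_zero]
  have vxpow : ∀ n : ℕ, v (x ^ n) = -((n : ℤ) * u) := by
    intro n
    rw [aux_v_pow v hmul x hx0 n, hvx]
    ring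
  -- main algebraic identity
  have hσx' : σ x = x + t := by rw [hσx, ht_def]; ring
  have heq : (x + t) ^ (r + 2) = x ^ (r + 2) + t := by
    have h := hfix
    rw [map_sub, map_pow, hσx'] at h
    linear_combination h
  rw [add_pow, Finset.sum_range_succ] at heq
  simp only [Nat.sub_self, pow_zero, mul_one, Nat.choose_self, Nat.cast_one] at heq
  rw [show Finset.range (r + 2) = Finset.range (r + 1 + 1) from by norm_num,
    Finset.sum_range_succ'] at heq
  simp only [pow_zero, Nat.choose_zero_right, Nat.cast_one, one_mul, mul_one, Nat.sub_zero,
    Nat.add_sub_add_right] at heq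
  have hA : (∑ i ∈ Finset.range (r + 1), x ^ (i + 1) * t ^ (r + 2 - (i + 1)) * ((r + 2).choose (i + 1) : L))
      + t ^ (r + 2) = t := by
    linear_combination heq
  -- expansion of t ^ (r + 2)
  have hB : t ^ (r + 2) = (∑ j ∈ Finset.range (r + 1), δ ^ (j + 1 + 1) * ((r + 2).choose (j + 1 + 1) : L))
      + δ * ((r + 2 : ℕ) : L) + 1 := by
    have h := add_pow δ 1 (r + 2)
    simp only [one_pow, mul_one] at h
    rw [show Finset.range (r + 2 + 1) = Finset.range (r + 1 + 1 + 1) from by norm_num,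
      Finset.sum_range_succ', Finset.sum_range_succ'] at h
    simp only [zero_add, pow_zero, pow_one, Nat.choose_zero_right, Nat.choose_one_right,
      Nat.cast_one, one_mul, mul_one] at h
    rw [show t = δ + 1 from by rw [ht_def]; ring, h]
  set R : L := ∑ i ∈ Finset.range (r + 1), x ^ (i + 1) * t ^ (r + 2 - (i + 1)) * ((r + 2).choose (i + 1) : L) with hRdef
  set S1 : L := ∑ j ∈ Finset.range (r + 1), δ ^ (j + 1 + 1) * ((r + 2).choose (j + 1 + 1) : L) with hS1def
  have hE : (1 - ((r + 2 : ℕ) : L)) * δ - S1 = R := by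
    linear_combination (-1 : L) * hA + hB - ht_def
  -- split off dominant term of R
  have hchoose : (r + 2).choose (r + 1) = r + 2 := by
    rw [show r + 2 = r + 1 + 1 from rfl]
    exact Nat.choose_succ_self_right _
  have hRsplit : R = (∑ i ∈ Finset.range r, x ^ (i + 1) * t ^ (r + 2 - (i + 1)) * ((r + 2).choose (i + 1) : L))
      + x ^ (r + 1) * t * ((r + 2 : ℕ) : L) := by
    rw [hRdef, Finset.sum_range_succ, show r + 2 - (r + 1) = 1 by omega, pow_one, hchoose]
  have hD0 : x ^ (r + 1) * t * ((r + 2 : ℕ) : L) ≠ 0 :=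
    mul_ne_zero (mul_ne_zero (pow_ne_zero _ hx0) ht0) hpL
  have hvD : v (x ^ (r + 1) * t * ((r + 2 : ℕ) : L)) = v ((r + 2 : ℕ) : L) - ((r : ℤ) + 1) * u := by
    rw [hmul _ _ (mul_ne_zero (pow_ne_zero _ hx0) ht0) hpL,
      hmul _ _ (pow_ne_zero _ hx0) ht0, vxpow, htv,
      show ((r + 1 : ℕ) : ℤ) = (r : ℤ) + 1 by push_cast; ring]
    ring
  have hSrb : ∀ i ∈ Finset.range r,
      x ^ (i + 1) * t ^ (r + 2 - (i + 1)) * ((r + 2).choose (i + 1) : L) = 0 ∨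
      v ((r + 2 : ℕ) : L) - ((r : ℤ) + 1) * u + 1 ≤
        v (x ^ (i + 1) * t ^ (r + 2 - (i + 1)) * ((r + 2).choose (i + 1) : L)) := by
    intro i hi
    by_cases hC : ((r + 2).choose (i + 1) : L) = 0
    · left; simp [hC]
    right
    have hi' : i < r := Finset.mem_range.mp hi
    obtain ⟨m, hm⟩ := hp.dvd_choose_self (show i + 1 ≠ 0 by omega) (show i + 1 < r + 2 by omega)
    have hfact : ((r + 2).choose (i + 1) : L) = ((r + 2 : ℕ) : L) * ((m : ℕ) : L) := by
      rw [hm]; push_cast; ring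
    have hprod : ((r + 2 : ℕ) : L) * ((m : ℕ) : L) ≠ 0 := hfact ▸ hC
    have hmne : ((m : ℕ) : L) ≠ 0 := right_ne_zero_of_mul hprod
    have hvm : 0 ≤ v ((m : ℕ) : L) := aux_v_nat v hmul hadd m hmne
    show _ ≤ v (x ^ (i + 1) * t ^ (r + 2 - (i + 1)) * ((r + 2).choose (i + 1) : L))
    rw [hmul _ _ (mul_ne_zero (pow_ne_zero _ hx0) (pow_ne_zero _ ht0)) hC,
      hmul _ _ (pow_ne_zero _ hx0) (pow_ne_zero _ ht0), vxpow, vtpow, hfact,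
      hmul _ _ hpL hmne]
    have hle : ((i + 1 : ℕ) : ℤ) ≤ (r : ℤ) := by push_cast; omega
    nlinarith [mul_nonneg (show (0 : ℤ) ≤ (r : ℤ) - ((i + 1 : ℕ) : ℤ) by linarith)
      (show (0 : ℤ) ≤ (u : ℤ) by linarith)]
  have hSr := aux_v_sum v hadd (Finset.range r)
    (fun i => x ^ (i + 1) * t ^ (r + 2 - (i + 1)) * ((r + 2).choose (i + 1) : L))
    (v ((r + 2 : ℕ) : L) - ((r : ℤ) + 1) * u + 1) hSrb
  beta_reduce at hSr
  have hRD : x ^ (r + 1) * t * ((r + 2 : ℕ) : L)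
      + (∑ i ∈ Finset.range r, x ^ (i + 1) * t ^ (r + 2 - (i + 1)) * ((r + 2).choose (i + 1) : L)) = R := by
    rw [hRsplit]; ring
  have hRfacts : R ≠ 0 ∧ v R = v ((r + 2 : ℕ) : L) - ((r : ℤ) + 1) * u := by
    have hside : (∑ i ∈ Finset.range r, x ^ (i + 1) * t ^ (r + 2 - (i + 1)) * ((r + 2).choose (i + 1) : L)) = 0 ∨
        ((∑ i ∈ Finset.range r, x ^ (i + 1) * t ^ (r + 2 - (i + 1)) * ((r + 2).choose (i + 1) : L)) ≠ 0 ∧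
          v (x ^ (r + 1) * t * ((r + 2 : ℕ) : L)) <
            v (∑ i ∈ Finset.range r, x ^ (i + 1) * t ^ (r + 2 - (i + 1)) * ((r + 2).choose (i + 1) : L))) := by
      by_cases hz : (∑ i ∈ Finset.range r, x ^ (i + 1) * t ^ (r + 2 - (i + 1)) * ((r + 2).choose (i + 1) : L)) = 0
      · exact Or.inl hz
      · refine Or.inr ⟨hz, ?_⟩
        have := hSr.resolve_left hz
        rw [hvD]
        omega
    have h := aux_v_add v hmul hadd _ _ hD0 hside
    rw [hRD] at h
    rw [h.2, hvD]
    exact ⟨h.1, rfl⟩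
  -- δ ≠ 0
  have hδne : δ ≠ 0 := by
    intro h
    apply hRfacts.1
    rw [← hE, hS1def, h]
    rw [Finset.sum_eq_zero fun j hj => by rw [zero_pow (by omega : j + 1 + 1 ≠ 0), zero_mul]]
    ring
  have hv1δ : 1 ≤ v δ := hδ.resolve_left hδne
  -- v (1 - p) = 0
  have hone := aux_v_add v hmul hadd 1 (-((r + 2 : ℕ) : L)) one_ne_zero
    (Or.inr ⟨neg_ne_zero.mpr hpL, by rw [v1, aux_v_neg v hmul _ hpL]; exact hvp_pos⟩)
  rw [v1] at hone
  have h1Pne : (1 - ((r + 2 : ℕ) : L)) ≠ 0 := by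
    rw [sub_eq_add_neg]; exact hone.1
  have h1Pv : v (1 - ((r + 2 : ℕ) : L)) = 0 := by
    rw [sub_eq_add_neg]; exact hone.2
  have hL0ne : (1 - ((r + 2 : ℕ) : L)) * δ ≠ 0 := mul_ne_zero h1Pne hδne
  have hL0v : v ((1 - ((r + 2 : ℕ) : L)) * δ) = v δ := by
    rw [hmul _ _ h1Pne hδne, h1Pv, zero_add]
  -- bound on S1
  have hS1bb : ∀ j ∈ Finset.range (r + 1),
      δ ^ (j + 1 + 1) * ((r + 2).choose (j + 1 + 1) : L) = 0 ∨
      v δ + 1 ≤ v (δ ^ (j + 1 + 1) * ((r + 2).choose (j + 1 + 1) : L)) := by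
    intro j hj
    by_cases hC : ((r + 2).choose (j + 1 + 1) : L) = 0
    · left; simp [hC]
    right
    show _ ≤ v (δ ^ (j + 1 + 1) * ((r + 2).choose (j + 1 + 1) : L))
    rw [hmul _ _ (pow_ne_zero _ hδne) hC, aux_v_pow v hmul δ hδne]
    have hvC : 0 ≤ v ((r + 2).choose (j + 1 + 1) : L) := by
      have := aux_v_nat v hmul hadd ((r + 2).choose (j + 1 + 1)) hC
      exact this
    have h2 : (2 : ℤ) ≤ ((j + 1 + 1 : ℕ) : ℤ) := by push_cast; omega
    nlinarith [mul_le_mul_of_nonneg_right h2 (show (0 : ℤ) ≤ v δ by omega)]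
  have hS1b := aux_v_sum v hadd (Finset.range (r + 1))
    (fun j => δ ^ (j + 1 + 1) * ((r + 2).choose (j + 1 + 1) : L)) (v δ + 1) hS1bb
  beta_reduce at hS1b
  rw [← hS1def] at hS1b
  -- conclude
  have hfside : (-S1) = 0 ∨ ((-S1) ≠ 0 ∧ v ((1 - ((r + 2 : ℕ) : L)) * δ) < v (-S1)) := by
    by_cases hz : S1 = 0
    · exact Or.inl (by rw [hz, neg_zero])
    · refine Or.inr ⟨neg_ne_zero.mpr hz, ?_⟩
      rw [aux_v_neg v hmul _ hz, hL0v]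
      have := hS1b.resolve_left hz
      omega
  have hfin := aux_v_add v hmul hadd ((1 - ((r + 2 : ℕ) : L)) * δ) (-S1) hL0ne hfside
  have hEE : (1 - ((r + 2 : ℕ) : L)) * δ + -S1 = R := by rw [← hE]; ring
  rw [hEE, hL0v] at hfin
  have hvδ : v δ = v ((r + 2 : ℕ) : L) - ((r : ℤ) + 1) * u := by
    rw [← hfin.2, hRfacts.2]
  refine ⟨hδne, ?_⟩
  rw [hvδ]
  push_cast
  ring
end

section
/- Let 𝒪 be a discrete valuation ring with valuation v, residue characteristic p, and let Ω ∈ Frac(𝒪) with v(Ω) ≤ 0, set y = Ω^{1-p} (so v(y) ≥ 0), and suppose v(p) ≥ p^{t-1} v(y) for an integer t ≥ 1. Then ℘(Ω)^{p^t} - ℘(Ω^{p^t}) ∈ p·Ω^{p^{t-1}(p^2 - p + 1)}·𝒪, where ℘(z) = z^p - z. -/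
section aux
variable {F : Type*} [Field F] (v : F → ℤ)
  (hmul : ∀ a b : F, a ≠ 0 → b ≠ 0 → v (a * b) = v a + v b)
  (hadd : ∀ a b : F, a ≠ 0 → b ≠ 0 → a + b ≠ 0 → min (v a) (v b) ≤ v (a + b))

include hmul in
lemma aux_v1 : v 1 = 0 := by
  have := hmul 1 1 one_ne_zero one_ne_zero; simp at this; linarith

include hmul in
lemma aux_vinv {a : F} (ha : a ≠ 0) : v a⁻¹ = - v a := by
  have := hmul a a⁻¹ ha (inv_ne_zero ha)
  rw [mul_inv_cancel₀ ha, aux_v1 v hmul] at this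
  linarith

include hmul in
lemma aux_vpow {a : F} (ha : a ≠ 0) (m : ℕ) : v (a ^ m) = m * v a := by
  induction m with
  | zero => simpa using aux_v1 v hmul
  | succ k ih =>
      rw [pow_succ, hmul _ _ (pow_ne_zero _ ha) ha, ih]
      push_cast; ring

include hmul in
lemma aux_Pmul {a b : F} (ha : a = 0 ∨ 0 ≤ v a) (hb : b = 0 ∨ 0 ≤ v b) :
    a * b = 0 ∨ 0 ≤ v (a * b) := by
  rcases ha with rfl | ha; · simp
  rcases hb with rfl | hb; · simp
  by_cases h0 : a * b = 0; · exact Or.inl h0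
  rcases mul_ne_zero_iff.1 h0 with ⟨ha0, hb0⟩
  right; rw [hmul a b ha0 hb0]; linarith

include hadd in
lemma aux_Padd {a b : F} (ha : a = 0 ∨ 0 ≤ v a) (hb : b = 0 ∨ 0 ≤ v b) :
    a + b = 0 ∨ 0 ≤ v (a + b) := by
  rcases ha with rfl | ha; · simpa using hb
  rcases hb with rfl | hb; · rw [add_zero]; exact Or.inr ha
  by_cases ha0 : a = 0; · rw [ha0, zero_add]; exact Or.inr hb
  by_cases hb0 : b = 0; · rw [hb0, add_zero]; exact Or.inr ha
  by_cases h0 : a + b = 0; · exact Or.inl h0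
  right
  have := hadd a b ha0 hb0 h0
  have : min (v a) (v b) ≤ v (a + b) := this
  rcases le_total (v a) (v b) with h | h <;> simp [min_def, h] at this <;> linarith

include hmul hadd in
lemma aux_Pnat (m : ℕ) : (m : F) = 0 ∨ 0 ≤ v (m : F) := by
  induction m with
  | zero => simp
  | succ k ih =>
      push_cast
      exact aux_Padd v hadd ih (Or.inr (le_of_eq (aux_v1 v hmul).symm))

include hmul in
lemma aux_Pneg1pow (k : ℕ) : ((-1 : F) ^ k = 0) ∨ 0 ≤ v ((-1 : F) ^ k) := by
  right
  have hn1 : v (-1 : F) = 0 := by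
    have := hmul (-1) (-1) (by norm_num) (by norm_num)
    simp only [neg_mul, one_mul, neg_neg] at this
    rw [aux_v1 v hmul] at this; linarith
  rw [aux_vpow v hmul (by norm_num) k, hn1]; simp
end aux


lemma aux_exp_id (p A k : ℕ) (hp : 1 ≤ p) (hk : k ≤ A) :
    k + p * (A * p - k) = (A * p * p - A * p + A) + (p - 1) * (A - k) := by
  have h0 : 0 < p := hp
  have hkn : k ≤ A * p := le_trans hk (Nat.le_mul_of_pos_right _ h0)
  have h2 : A * p ≤ A * p * p := Nat.le_mul_of_pos_right _ h0
  zify [hk, hkn, h2, hp]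
  ring

lemma aux_exp_id' (p A k : ℕ) (hp : 1 ≤ p) (hk : A ≤ k) (hkn : k ≤ A * p) :
    (k + p * (A * p - k)) + (p - 1) * (k - A) = A * p * p - A * p + A := by
  have h0 : 0 < p := hp
  have h2 : A * p ≤ A * p * p := Nat.le_mul_of_pos_right _ h0
  zify [hk, hkn, h2, hp]
  ring

set_option maxRecDepth 4000 in
set_option maxHeartbeats 1000000 in
/-- Let `F` be the fraction field of a discrete valuation ring with valuation `v`
(elements of the valuation ring being those `x` with `x = 0` or `v x ≥ 0`), of residue
characteristic `p`.  Let `Ω ∈ F` with `v(Ω) ≤ 0`, set `y = Ω^{1-p}` (so `v(y) ≥ 0`), and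
suppose `v(p) ≥ p^{t-1} v(y)` for an integer `t ≥ 1`.  Then
`℘(Ω)^{p^t} - ℘(Ω^{p^t}) ∈ p · Ω^{p^{t-1}(p²-p+1)} · 𝒪`, where `℘(z) = z^p - z`. -/
theorem stmt18 (p t : ℕ) (hp : p.Prime) (ht : 1 ≤ t)
    {F : Type*} [Field F] (v : F → ℤ)
    (hmul : ∀ a b : F, a ≠ 0 → b ≠ 0 → v (a * b) = v a + v b)
    (hadd : ∀ a b : F, a ≠ 0 → b ≠ 0 → a + b ≠ 0 → min (v a) (v b) ≤ v (a + b))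
    (Ω : F) (hΩ0 : Ω ≠ 0) (hvΩ : v Ω ≤ 0) (hpF : (p : F) ≠ 0)
    (hkey : (p : ℤ) ^ (t - 1) * (((p : ℤ) - 1) * (-(v Ω))) ≤ v (p : F)) :
    ∃ c : F, (c = 0 ∨ 0 ≤ v c) ∧
      (Ω ^ p - Ω) ^ p ^ t - ((Ω ^ p ^ t) ^ p - Ω ^ p ^ t)
        = (p : F) * Ω ^ (p ^ (t - 1) * (p ^ 2 - p + 1)) * c := by
  have hp2 : 2 ≤ p := hp.two_le
  set A : ℕ := p ^ (t - 1) with hA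
  set n : ℕ := p ^ t with hn
  set N : ℕ := A * (p ^ 2 - p + 1) with hN
  have hnA : n = A * p := by
    rw [hn, hA, ← pow_succ]; congr 1; omega
  have hNsplit : N = A * p * p - A * p + A := by
    rw [hN]
    have h1 : p ≤ p ^ 2 := by nlinarith
    have h2 : A * p ≤ A * p * p := by nlinarith [Nat.one_le_iff_ne_zero.2 (pow_ne_zero (t-1) hp.pos.ne')]
    have h3 : p * p ^ (t - 1) ≤ p ^ 2 * p ^ (t - 1) := Nat.mul_le_mul h1 le_rfl
    zify [h1, h2, h3]
    ring
  have hΩn : ∀ m : ℕ, Ω ^ m ≠ 0 := fun m => pow_ne_zero m hΩ0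
  set D : F := (p : F) * Ω ^ N with hD
  have hD0 : D ≠ 0 := mul_ne_zero hpF (hΩn N)
  have hn2 : 2 ≤ n := le_trans hp2 (Nat.le_self_pow (by omega) p)
  have hP1 : ∀ k : ℕ, ((-1 : F) ^ k = 0) ∨ 0 ≤ v ((-1 : F) ^ k) :=
    aux_Pneg1pow v hmul
  have hPnat : ∀ m : ℕ, (m : F) = 0 ∨ 0 ≤ v (m : F) := aux_Pnat v hmul hadd
  have hPinv : ∀ m : ℕ, ((Ω ^ m)⁻¹ = 0) ∨ 0 ≤ v ((Ω ^ m)⁻¹) := by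
    intro m
    right
    rw [aux_vinv v hmul (hΩn m), aux_vpow v hmul hΩ0 m]
    nlinarith [Int.natCast_nonneg m, hvΩ]
  refine ⟨((Ω ^ p - Ω) ^ n - ((Ω ^ n) ^ p - Ω ^ n)) * D⁻¹, ?_, by
    rw [hD]; field_simp⟩
  have hexpand : (Ω ^ p - Ω) ^ n
      = ∑ k ∈ Finset.range (n + 1), (-Ω) ^ k * (Ω ^ p) ^ (n - k) * (n.choose k : F) := by
    rw [show Ω ^ p - Ω = -Ω + Ω ^ p by ring, add_pow]
  have hsplit : ∑ k ∈ Finset.range (n + 1), (-Ω) ^ k * (Ω ^ p) ^ (n - k) * (n.choose k : F)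
      = (Ω ^ n) ^ p + (∑ i ∈ Finset.range (n - 1), (-Ω) ^ (i+1) * (Ω ^ p) ^ (n - (i+1)) * (n.choose (i+1) : F))
        + (-1) ^ n * Ω ^ n := by
    have e1 : n + 1 = (n - 1) + 1 + 1 := by omega
    rw [e1, Finset.sum_range_succ, Finset.sum_range_succ']
    have e2 : n - 1 + 1 = n := by omega
    rw [e2, Nat.sub_self, Nat.choose_self, Nat.choose_zero_right, Nat.sub_zero, pow_zero,
      neg_pow Ω n]
    push_cast
    ring
  have key : ((Ω ^ p - Ω) ^ n - ((Ω ^ n) ^ p - Ω ^ n)) * D⁻¹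
      = (∑ i ∈ Finset.range (n - 1), ((-Ω) ^ (i+1) * (Ω ^ p) ^ (n - (i+1)) * (n.choose (i+1) : F)) * D⁻¹)
        + ((-1) ^ n + 1) * Ω ^ n * D⁻¹ := by
    rw [hexpand, hsplit, ← Finset.sum_mul]
    ring
  rw [key]
  apply aux_Padd v hadd
  · -- the sum
    apply Finset.sum_induction _ (fun x : F => x = 0 ∨ 0 ≤ v x)
      (fun a b ha hb => aux_Padd v hadd ha hb) (Or.inl rfl)
    intro i hi
    rw [Finset.mem_range] at hi
    set k := i + 1 with hk
    have hk1 : 1 ≤ k := by omega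
    have hkn : k < n := by omega
    have hjdvd : p ^ (multiplicity p k) ∣ k := pow_multiplicity_dvd p k
    have hjle : p ^ (multiplicity p k) ≤ k := Nat.le_of_dvd (by omega) hjdvd
    have hdvd : p ^ (t - multiplicity p k) ∣ n.choose k := by
      have h1 := Nat.Prime.emultiplicity_choose_prime_pow hp (le_of_lt hkn) (by omega)
      exact pow_dvd_of_le_emultiplicity (le_of_eq h1.symm)
    by_cases hcase : k < A
    · -- small k : p^2 divides choose
      have hj2 : 2 ≤ t - multiplicity p k := by
        have : p ^ (multiplicity p k) < p ^ (t - 1) := lt_of_le_of_lt hjle hcase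
        have := (Nat.pow_lt_pow_iff_right hp.one_lt).1 this
        omega
      obtain ⟨u, hu⟩ : p ^ 2 ∣ n.choose k := (pow_dvd_pow p hj2).trans hdvd
      have hexp : k + p * (n - k) = N + (p - 1) * (A - k) := by
        rw [hnA, hNsplit]
        exact aux_exp_id p A k (by omega) hcase.le
      have e1 : Ω ^ k * Ω ^ (p * (n - k)) = Ω ^ ((p - 1) * (A - k)) * Ω ^ N := by
        rw [← pow_add, ← pow_add, hexp, Nat.add_comm]
      have hterm : (-Ω) ^ k * (Ω ^ p) ^ (n - k) * (n.choose k : F) * D⁻¹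
          = (-1) ^ k * (u : F) * ((p : F) * Ω ^ ((p - 1) * (A - k))) := by
        rw [hu, hD, neg_pow, ← pow_mul]
        push_cast
        have hpinv : (p : F) * (p : F)⁻¹ = 1 := mul_inv_cancel₀ hpF
        have hNinv : Ω ^ N * (Ω ^ N)⁻¹ = 1 := mul_inv_cancel₀ (hΩn N)
        rw [mul_inv]
        calc _ = (-1) ^ k * (Ω ^ k * Ω ^ (p * (n - k))) * ((p : F) ^ 2 * (u : F)) * ((p : F)⁻¹ * (Ω ^ N)⁻¹) := by ring
          _ = _ := by
            rw [e1]
            linear_combination ((-1 : F) ^ k * Ω ^ ((p - 1) * (A - k)) * (u : F) * (p : F) * ((p : F) * (p : F)⁻¹)) * hNinv + ((-1 : F) ^ k * Ω ^ ((p - 1) * (A - k)) * (u : F) * (p : F)) * hpinv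
      rw [hterm]
      refine aux_Pmul v hmul (aux_Pmul v hmul (hP1 k) (hPnat u)) (Or.inr ?_)
      rw [hmul _ _ hpF (hΩn _), aux_vpow v hmul hΩ0]
      have hcast : (((p - 1) * (A - k) : ℕ) : ℤ) = ((p : ℤ) - 1) * ((A : ℤ) - (k : ℤ)) := by
        push_cast [Nat.cast_sub hcase.le, Nat.cast_sub (show 1 ≤ p by omega)]
        ring
      rw [hcast]
      have hAcast : ((A : ℕ) : ℤ) = (p : ℤ) ^ (t - 1) := by rw [hA]; push_cast; ring
      have hk0 : (0 : ℤ) ≤ (k : ℤ) := Int.natCast_nonneg k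
      have hkA : (k : ℤ) ≤ (A : ℤ) := by exact_mod_cast hcase.le
      have hp1 : (1 : ℤ) ≤ (p : ℤ) := by exact_mod_cast (by omega : 1 ≤ p)
      have hkey' : (A : ℤ) * (((p : ℤ) - 1) * (-(v Ω))) ≤ v (p : F) := by
        rw [hAcast]; exact hkey
      nlinarith [hkey', hvΩ, mul_nonneg (mul_nonneg (by linarith : (0:ℤ) ≤ (p:ℤ) - 1) hk0) (by linarith : (0:ℤ) ≤ -(v Ω))]
    · -- large k : p divides choose
      have hjt : multiplicity p k < t := by
        have : p ^ (multiplicity p k) < p ^ t := lt_of_le_of_lt hjle hkn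
        exact (Nat.pow_lt_pow_iff_right hp.one_lt).1 this
      obtain ⟨u, hu⟩ : p ∣ n.choose k :=
        dvd_trans (dvd_pow_self p (by omega : t - multiplicity p k ≠ 0)) hdvd
      have hexp : (k + p * (n - k)) + (p - 1) * (k - A) = N := by
        rw [hnA, hNsplit]
        exact aux_exp_id' p A k (by omega) (by omega) (by rw [← hnA]; omega)
      have e2 : Ω ^ N = Ω ^ (k + p * (n - k)) * Ω ^ ((p - 1) * (k - A)) := by
        rw [← pow_add, hexp]
      have hterm : (-Ω) ^ k * (Ω ^ p) ^ (n - k) * (n.choose k : F) * D⁻¹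
          = (-1) ^ k * (u : F) * (Ω ^ ((p - 1) * (k - A)))⁻¹ := by
        rw [hu, hD, e2, neg_pow, ← pow_mul]
        push_cast
        rw [pow_add]
        field_simp
        ring
      rw [hterm]
      exact aux_Pmul v hmul (aux_Pmul v hmul (hP1 k) (hPnat u)) (hPinv _)
  · -- the boundary term
    rcases hp.eq_two_or_odd' with hptwo | hodd
    · subst hptwo
      have hNn : N = n + A := by
        have h1 : N = A * 3 := by rw [hN]; norm_num
        have h2 : n = A * 2 := by rw [hnA]
        omega
      have heven : Even n := by
        rw [hn]
        exact (Nat.even_pow).2 ⟨even_iff_two_dvd.2 (dvd_refl 2), by omega⟩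
      have hterm : ((-1 : F) ^ n + 1) * Ω ^ n * D⁻¹ = (Ω ^ A)⁻¹ := by
        apply mul_right_cancel₀ hD0
        rw [mul_assoc, inv_mul_cancel₀ hD0, mul_one, hD, hNn, pow_add, heven.neg_one_pow]
        field_simp
        ring
      rw [hterm]
      exact hPinv A
    · have hodd' : Odd n := hodd.pow
      rw [hodd'.neg_one_pow]
      norm_num
end
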